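/- Let B_1,…,B_p satisfy B_i^T + B_i ≤ 0, let u be a piecewise constant input with switching times (a_n), and let x ∈ R^d. Suppose (a_{n_k}) is a sequence of switching times with Φ_u(a_{n_k})x → l, the input value u_{n_k} equals a fixed index i for all k, and the durations δ_{n_k} = a_{n_k+1} − a_{n_k} are bounded below by some δ > 0. Then l ∈ V_i = {y : ‖e^{tB_i}y‖ = ‖y‖ for all t ∈ R}. -/

import Mathlib

set_option maxHeartbeats 1000000

open Matrix Filter

section Helpers
open NormedSpace

theorem hasDerivAt_expVec {d : ℕ} (A : Matrix (Fin d) (Fin d) ℝ) (l : Fin d → ℝ) (t : ℝ) :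
    HasDerivAt (fun s : ℝ => (exp (s • A)) *ᵥ l) (A *ᵥ ((exp (t • A)) *ᵥ l)) t := by
  letI : SeminormedRing (Matrix (Fin d) (Fin d) ℝ) := Matrix.linftyOpSemiNormedRing
  letI : NormedRing (Matrix (Fin d) (Fin d) ℝ) := Matrix.linftyOpNormedRing
  letI : NormedAlgebra ℝ (Matrix (Fin d) (Fin d) ℝ) := Matrix.linftyOpNormedAlgebra
  have hD := hasDerivAt_exp_smul_const' (𝕂 := ℝ) A t
  let Tl : Matrix (Fin d) (Fin d) ℝ →ₗ[ℝ] (Fin d → ℝ) :=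
    { toFun := fun m => m *ᵥ l
      map_add' := fun m m' => Matrix.add_mulVec m m' l
      map_smul' := fun c m => by simp [Matrix.smul_mulVec] }
  have h := (LinearMap.toContinuousLinearMap Tl).hasFDerivAt.comp_hasDerivAt t hD
  have h' : HasDerivAt (fun s : ℝ => (exp (s • A)) *ᵥ l) ((A * exp (t • A)) *ᵥ l) t := h
  simpa [Tl, Matrix.mulVec_mulVec] using h'

theorem hasDerivAt_dot {d : ℕ} (A : Matrix (Fin d) (Fin d) ℝ) (l : Fin d → ℝ) (t : ℝ) :
    HasDerivAt (fun s : ℝ => (exp (s • A) *ᵥ l) ⬝ᵥ (exp (s • A) *ᵥ l))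
      ((exp (t • A) *ᵥ l) ⬝ᵥ ((Aᵀ + A) *ᵥ (exp (t • A) *ᵥ l))) t := by
  have hY := hasDerivAt_expVec A l t
  have hYi := hasDerivAt_pi.mp hY
  set y := exp (t • A) *ᵥ l with hy
  have h : HasDerivAt (fun s : ℝ => (exp (s • A) *ᵥ l) ⬝ᵥ (exp (s • A) *ᵥ l))
      ((A *ᵥ y) ⬝ᵥ y + y ⬝ᵥ (A *ᵥ y)) t := by
    simp only [dotProduct]
    have : ∀ j : Fin d, HasDerivAt (fun s : ℝ => (exp (s • A) *ᵥ l) j * (exp (s • A) *ᵥ l) j)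
        ((A *ᵥ y) j * y j + y j * (A *ᵥ y) j) t := fun j => (hYi j).mul (hYi j)
    simpa [Finset.sum_add_distrib] using HasDerivAt.fun_sum (fun j _ => this j)
  convert h using 1
  rw [Matrix.add_mulVec, dotProduct_add, Matrix.dotProduct_mulVec y Aᵀ y,
    Matrix.vecMul_transpose]

theorem dot_antitone {d : ℕ} (A : Matrix (Fin d) (Fin d) ℝ)
    (hA : ∀ x : Fin d → ℝ, x ⬝ᵥ ((Aᵀ + A) *ᵥ x) ≤ 0) (l : Fin d → ℝ) :
    Antitone (fun s : ℝ => (exp (s • A) *ᵥ l) ⬝ᵥ (exp (s • A) *ᵥ l)) := by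
  apply antitone_of_deriv_nonpos
  · exact fun t => (hasDerivAt_dot A l t).differentiableAt
  · intro t
    rw [(hasDerivAt_dot A l t).deriv]
    exact hA _

theorem dot_self_nonneg {d : ℕ} (x : Fin d → ℝ) : 0 ≤ x ⬝ᵥ x :=
  Finset.sum_nonneg fun i _ => mul_self_nonneg (x i)

/-- negative semidefinite quadratic form vanishing implies kernel membership -/
theorem kernel_of_dot_eq_zero {d : ℕ} (A : Matrix (Fin d) (Fin d) ℝ)
    (hA : ∀ x : Fin d → ℝ, x ⬝ᵥ ((Aᵀ + A) *ᵥ x) ≤ 0) (y : Fin d → ℝ)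
    (hy : y ⬝ᵥ ((Aᵀ + A) *ᵥ y) = 0) : (Aᵀ + A) *ᵥ y = 0 := by
  set M := Aᵀ + A with hM
  have hsymm : Mᵀ = M := by rw [hM, Matrix.transpose_add, Matrix.transpose_transpose, add_comm]
  set z := M *ᵥ y with hz
  set n := z ⬝ᵥ z with hn
  set c := z ⬝ᵥ (M *ᵥ z) with hc
  have h1 : y ⬝ᵥ (M *ᵥ z) = n := by
    rw [Matrix.dotProduct_mulVec, ← hsymm, Matrix.vecMul_transpose, hn, ← hz]
  have key : ∀ t : ℝ, 2 * t * n + t ^ 2 * c ≤ 0 := by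
    intro t
    have h := hA (y + t • z)
    rw [Matrix.mulVec_add, Matrix.mulVec_smul, add_dotProduct,
      smul_dotProduct, dotProduct_add, dotProduct_add,
      dotProduct_smul, dotProduct_smul, ← hz, h1, hy, ← hc, ← hn] at h
    simp only [smul_eq_mul] at h
    nlinarith [h]
  have hcn : c ≤ 0 := by have := hA z; rwa [← hc] at this
  have hnn : 0 ≤ n := dot_self_nonneg z
  have h1c : (0:ℝ) < 1 - c := by linarith
  have hteq : n / (1 - c) * (1 - c) = n := div_mul_cancel₀ n h1c.ne'
  have hn0 : n = 0 := by nlinarith [key (n / (1 - c)), sq_nonneg n, sq_nonneg (n / (1 - c))]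
  funext i
  have : ∀ j ∈ Finset.univ, (0:ℝ) ≤ z j * z j := fun j _ => mul_self_nonneg _
  have := (Finset.sum_eq_zero_iff_of_nonneg this).mp hn0 i (Finset.mem_univ i)
  have := mul_self_eq_zero.mp this
  simpa using this

/-- If a differentiable function vanishes on `[0, δ]`, so does its (continuous) derivative. -/
theorem deriv_zero_on_Icc {F : Type*} [NormedAddCommGroup F] [NormedSpace ℝ F]
    {g g' : ℝ → F} (hd : ∀ s, HasDerivAt g (g' s) s) (hc : Continuous g')
    {δ : ℝ} (hδ : 0 < δ) (h0 : ∀ s ∈ Set.Icc 0 δ, g s = 0) :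
    ∀ s ∈ Set.Icc 0 δ, g' s = 0 := by
  have hIoo : Set.EqOn g' 0 (Set.Ioo 0 δ) := by
    intro s hs
    have hev : g =ᶠ[nhds s] (fun _ => 0) := by
      filter_upwards [isOpen_Ioo.mem_nhds hs] with t ht
      exact h0 t (Set.Ioo_subset_Icc_self ht)
    have h2 : HasDerivAt g 0 s := (hasDerivAt_const s (0:F)).congr_of_eventuallyEq hev
    exact (hd s).unique h2
  have := hIoo.closure hc continuous_const
  rw [closure_Ioo hδ.ne] at this
  exact fun s hs => this hs

theorem exp_continuous_vec {d : ℕ} (A : Matrix (Fin d) (Fin d) ℝ) (l : Fin d → ℝ) :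
    Continuous (fun s : ℝ => exp (s • A) *ᵥ l) :=
  continuous_iff_continuousAt.mpr fun t => (hasDerivAt_expVec A l t).continuousAt

theorem exp_kernel_propagate {d : ℕ} (A M : Matrix (Fin d) (Fin d) ℝ) (l : Fin d → ℝ)
    {δ : ℝ} (hδ : 0 < δ)
    (hbase : ∀ s ∈ Set.Icc 0 δ, M *ᵥ (exp (s • A) *ᵥ l) = 0) :
    ∀ n : ℕ, ∀ s ∈ Set.Icc 0 δ, (M * A ^ n) *ᵥ (exp (s • A) *ᵥ l) = 0 := by
  intro n
  induction n with
  | zero => simpa using hbase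
  | succ n ih =>
    have hC : ∀ (N : Matrix (Fin d) (Fin d) ℝ) (t : ℝ),
        HasDerivAt (fun s : ℝ => N *ᵥ (exp (s • A) *ᵥ l))
          ((N * A) *ᵥ (exp (t • A) *ᵥ l)) t := by
      intro N t
      have h := ((Matrix.mulVecLin N).toContinuousLinearMap).hasFDerivAt.comp_hasDerivAt t
        (hasDerivAt_expVec A l t)
      have he : (⇑(LinearMap.toContinuousLinearMap N.mulVecLin) ∘ fun s : ℝ => exp (s • A) *ᵥ l) = fun s : ℝ => N *ᵥ (exp (s • A) *ᵥ l) := by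
        funext s; simp [Function.comp]
      rw [he] at h
      simpa [Matrix.mulVec_mulVec, mul_assoc] using h
    have := deriv_zero_on_Icc (g := fun s => (M * A ^ n) *ᵥ (exp (s • A) *ᵥ l))
      (g' := fun s => (M * A ^ n * A) *ᵥ (exp (s • A) *ᵥ l))
      (fun s => hC (M * A ^ n) s) ?_ hδ ih
    · intro s hs
      have h2 := this s hs
      simpa [pow_succ, mul_assoc] using h2
    · exact Continuous.comp (LinearMap.continuous_of_finiteDimensional
        (Matrix.mulVecLin (M * A ^ n * A))) (exp_continuous_vec A l)

theorem mulVec_exp_zero_of_kernel {d : ℕ} (A M : Matrix (Fin d) (Fin d) ℝ) (l : Fin d → ℝ)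
    (h : ∀ n : ℕ, (M * A ^ n) *ᵥ l = 0) (t : ℝ) :
    M *ᵥ (exp (t • A) *ᵥ l) = 0 := by
  letI : SeminormedRing (Matrix (Fin d) (Fin d) ℝ) := Matrix.linftyOpSemiNormedRing
  letI : NormedRing (Matrix (Fin d) (Fin d) ℝ) := Matrix.linftyOpNormedRing
  letI : NormedAlgebra ℝ (Matrix (Fin d) (Fin d) ℝ) := Matrix.linftyOpNormedAlgebra
  let T : Matrix (Fin d) (Fin d) ℝ →ₗ[ℝ] (Fin d → ℝ) :=
    { toFun := fun m => M *ᵥ (m *ᵥ l)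
      map_add' := fun m m' => by simp [Matrix.add_mulVec, Matrix.mulVec_add]
      map_smul' := fun c m => by simp [Matrix.smul_mulVec, Matrix.mulVec_smul] }
  have hsum : Summable (fun n : ℕ => ((n.factorial : ℝ))⁻¹ • (t • A) ^ n) :=
    NormedSpace.expSeries_summable' (𝕂 := ℝ) (t • A)
  have hmap := (LinearMap.toContinuousLinearMap T).map_tsum hsum
  have hexp : exp (t • A) = ∑' n : ℕ, ((n.factorial : ℝ))⁻¹ • (t • A) ^ n := by
    rw [NormedSpace.exp_eq_tsum (𝕂 := ℝ)]
  have : M *ᵥ (exp (t • A) *ᵥ l) = LinearMap.toContinuousLinearMap T (exp (t • A)) := rfl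
  rw [this, hexp, hmap]
  have hterm : ∀ n : ℕ, (LinearMap.toContinuousLinearMap T) (((n.factorial : ℝ))⁻¹ • (t • A) ^ n) = 0 := by
    intro n
    have : ((n.factorial : ℝ))⁻¹ • (t • A) ^ n = (((n.factorial : ℝ))⁻¹ * t ^ n) • A ^ n := by
      rw [smul_pow, smul_smul]
    rw [this]
    show T ((((n.factorial : ℝ))⁻¹ * t ^ n) • A ^ n) = 0
    rw [LinearMap.map_smul]
    show (((n.factorial : ℝ))⁻¹ * t ^ n) • (M *ᵥ (A ^ n *ᵥ l)) = 0
    rw [Matrix.mulVec_mulVec, h n, smul_zero]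
  simp only [hterm, tsum_zero]

theorem dot_const_of_kernel_all {d : ℕ} (A : Matrix (Fin d) (Fin d) ℝ) (l : Fin d → ℝ)
    (h : ∀ t : ℝ, (Aᵀ + A) *ᵥ (exp (t • A) *ᵥ l) = 0) (t : ℝ) :
    (exp (t • A) *ᵥ l) ⬝ᵥ (exp (t • A) *ᵥ l) = l ⬝ᵥ l := by
  have hconst : ∀ u v : ℝ, (exp (u • A) *ᵥ l) ⬝ᵥ (exp (u • A) *ᵥ l)
      = (exp (v • A) *ᵥ l) ⬝ᵥ (exp (v • A) *ᵥ l) := by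
    apply is_const_of_deriv_eq_zero
    · exact fun s => (hasDerivAt_dot A l s).differentiableAt
    · intro s
      rw [(hasDerivAt_dot A l s).deriv, h s, dotProduct_zero]
  have := hconst t 0
  simpa using this

theorem continuous_dot_pair {d : ℕ} : Continuous (fun p : (Fin d → ℝ) × (Fin d → ℝ) => p.1 ⬝ᵥ p.2) := by
  unfold dotProduct
  exact continuous_finset_sum _ fun i _ =>
    ((continuous_apply i).comp continuous_fst).mul ((continuous_apply i).comp continuous_snd)

theorem main_thm {d p : ℕ}
    (B : Fin p → Matrix (Fin d) (Fin d) ℝ)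
    (hB : ∀ i, ∀ x : Fin d → ℝ, x ⬝ᵥ (((B i)ᵀ + B i).mulVec x) ≤ 0)
    (a : ℕ → ℝ) (ha0 : a 0 = 0) (hamono : StrictMono a) (hatop : Filter.Tendsto a Filter.atTop Filter.atTop)
    (v : ℕ → Fin p)
    (Φ : ℝ → Matrix (Fin d) (Fin d) ℝ) (hΦ0 : Φ 0 = 1)
    (hΦ : ∀ n, ∀ t ∈ Set.Icc (a n) (a (n + 1)),
      Φ t = NormedSpace.exp ((t - a n) • B (v n)) * Φ (a n))
    (x : Fin d → ℝ) (l : Fin d → ℝ) (i : Fin p) (δ : ℝ) (hδ : 0 < δ)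
    (nk : ℕ → ℕ) (hnk : StrictMono nk)
    (hval : ∀ k, v (nk k) = i)
    (hdur : ∀ k, δ ≤ a (nk k + 1) - a (nk k))
    (hlim : Filter.Tendsto (fun k => (Φ (a (nk k))).mulVec x) Filter.atTop (nhds l)) :
    ∀ t : ℝ, Real.sqrt (((NormedSpace.exp (t • B i)).mulVec l) ⬝ᵥ ((NormedSpace.exp (t • B i)).mulVec l)) = Real.sqrt (l ⬝ᵥ l) := by
  classical
  -- trajectory within a segment
  have hseg : ∀ n, ∀ s : ℝ, 0 ≤ s → s ≤ a (n+1) - a n →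
      (Φ (a n + s)) *ᵥ x = exp (s • B (v n)) *ᵥ ((Φ (a n)) *ᵥ x) := by
    intro n s h0 h1
    have hle : a n ≤ a (n+1) := (hamono n.lt_succ_self).le
    have hmem : a n + s ∈ Set.Icc (a n) (a (n+1)) := ⟨by linarith, by linarith⟩
    rw [hΦ n _ hmem, ← Matrix.mulVec_mulVec]
    norm_num
  set N : ℕ → ℝ := fun n => ((Φ (a n)) *ᵥ x) ⬝ᵥ ((Φ (a n)) *ᵥ x) with hN
  have hanti_seg : ∀ n, ∀ s s' : ℝ, 0 ≤ s → s ≤ s' → s' ≤ a (n+1) - a n →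
      ((Φ (a n + s')) *ᵥ x) ⬝ᵥ ((Φ (a n + s')) *ᵥ x) ≤
      ((Φ (a n + s)) *ᵥ x) ⬝ᵥ ((Φ (a n + s)) *ᵥ x) := by
    intro n s s' h0 hss hs'
    rw [hseg n s h0 (le_trans hss hs'), hseg n s' (le_trans h0 hss) hs']
    exact dot_antitone (B (v n)) (hB (v n)) ((Φ (a n)) *ᵥ x) hss
  have hNsucc : ∀ n, N (n+1) ≤ N n := by
    intro n
    have hle : a n ≤ a (n+1) := (hamono n.lt_succ_self).le
    have h := hanti_seg n 0 (a (n+1) - a n) le_rfl (by linarith) le_rfl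
    simpa [hN] using h
  have hNanti : Antitone N := antitone_nat_of_succ_le hNsucc
  have hbdd : BddBelow (Set.range N) := ⟨0, by rintro y ⟨n, rfl⟩; exact dot_self_nonneg _⟩
  have hNlim : Filter.Tendsto N Filter.atTop (nhds (⨅ n, N n)) := tendsto_atTop_ciInf hNanti hbdd
  set L := ⨅ n, N n with hL
  have hnk_top : Filter.Tendsto nk Filter.atTop Filter.atTop := hnk.tendsto_atTop
  have h1 : Filter.Tendsto (fun k => N (nk k)) Filter.atTop (nhds L) := hNlim.comp hnk_top
  have hdotcont : Continuous (fun y : Fin d → ℝ => y ⬝ᵥ y) :=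
    continuous_dot_pair.comp (continuous_id.prodMk continuous_id)
  have h2 : Filter.Tendsto (fun k => N (nk k)) Filter.atTop (nhds (l ⬝ᵥ l)) :=
    (hdotcont.tendsto l).comp hlim
  have hLl : L = l ⬝ᵥ l := tendsto_nhds_unique h1 h2
  -- norm preserved on [0, δ]
  have hIcc : ∀ s ∈ Set.Icc (0:ℝ) δ,
      (exp (s • B i) *ᵥ l) ⬝ᵥ (exp (s • B i) *ᵥ l) = l ⬝ᵥ l := by
    intro s hs
    have hcontF : Continuous fun y : Fin d → ℝ => (exp (s • B i) *ᵥ y) ⬝ᵥ (exp (s • B i) *ᵥ y) := by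
      have hmv : Continuous fun y : Fin d → ℝ => exp (s • B i) *ᵥ y :=
        LinearMap.continuous_of_finiteDimensional (Matrix.mulVecLin (exp (s • B i)))
      exact continuous_dot_pair.comp (hmv.prodMk hmv)
    have hgk : ∀ k, (fun y : Fin d → ℝ => (exp (s • B i) *ᵥ y) ⬝ᵥ (exp (s • B i) *ᵥ y))
        ((Φ (a (nk k))) *ᵥ x)
        = ((Φ (a (nk k) + s)) *ᵥ x) ⬝ᵥ ((Φ (a (nk k) + s)) *ᵥ x) := by
      intro k
      rw [hseg (nk k) s hs.1 (le_trans hs.2 (hdur k)), hval k]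
    have hg1 : Filter.Tendsto (fun k => ((Φ (a (nk k) + s)) *ᵥ x) ⬝ᵥ ((Φ (a (nk k) + s)) *ᵥ x))
        Filter.atTop (nhds ((exp (s • B i) *ᵥ l) ⬝ᵥ (exp (s • B i) *ᵥ l))) := by
      have h := (hcontF.tendsto l).comp hlim
      refine h.congr fun k => hgk k
    have hub : ∀ k, ((Φ (a (nk k) + s)) *ᵥ x) ⬝ᵥ ((Φ (a (nk k) + s)) *ᵥ x) ≤ N (nk k) := by
      intro k
      have h := hanti_seg (nk k) 0 s le_rfl hs.1 (le_trans hs.2 (hdur k))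
      simpa [hN] using h
    have hlb : ∀ k, N (nk k + 1) ≤ ((Φ (a (nk k) + s)) *ᵥ x) ⬝ᵥ ((Φ (a (nk k) + s)) *ᵥ x) := by
      intro k
      have h := hanti_seg (nk k) s (a (nk k + 1) - a (nk k)) hs.1 (le_trans hs.2 (hdur k)) le_rfl
      simpa [hN] using h
    have h3 : Filter.Tendsto (fun k => N (nk k + 1)) Filter.atTop (nhds L) :=
      hNlim.comp (Filter.tendsto_atTop_mono (fun k => Nat.le_succ (nk k)) hnk_top)
    have hsq := tendsto_of_tendsto_of_tendsto_of_le_of_le h3 h1 hlb hub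
    have := tendsto_nhds_unique hg1 hsq
    rw [this, hLl]
  -- propagate to all of ℝ
  set A := B i with hA
  have hder : ∀ u ∈ Set.Icc (0:ℝ) δ,
      (exp (u • A) *ᵥ l) ⬝ᵥ ((Aᵀ + A) *ᵥ (exp (u • A) *ᵥ l)) = 0 := by
    have hcg' : Continuous fun u : ℝ => (exp (u • A) *ᵥ l) ⬝ᵥ ((Aᵀ + A) *ᵥ (exp (u • A) *ᵥ l)) := by
      have hY := exp_continuous_vec A l
      have hMY : Continuous fun u : ℝ => (Aᵀ + A) *ᵥ (exp (u • A) *ᵥ l) :=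
        (LinearMap.continuous_of_finiteDimensional (Matrix.mulVecLin (Aᵀ + A))).comp hY
      exact continuous_dot_pair.comp (hY.prodMk hMY)
    have h := deriv_zero_on_Icc (g := fun u => (exp (u • A) *ᵥ l) ⬝ᵥ (exp (u • A) *ᵥ l) - l ⬝ᵥ l)
      (g' := fun u => (exp (u • A) *ᵥ l) ⬝ᵥ ((Aᵀ + A) *ᵥ (exp (u • A) *ᵥ l)))
      (fun u => (hasDerivAt_dot A l u).sub_const _) hcg' hδ
      (fun u hu => by simp only [hIcc u hu, sub_self])
    exact h
  have hker : ∀ u ∈ Set.Icc (0:ℝ) δ, (Aᵀ + A) *ᵥ (exp (u • A) *ᵥ l) = 0 := fun u hu =>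
    kernel_of_dot_eq_zero A (hB i) _ (hder u hu)
  have hkerpow : ∀ n : ℕ, ((Aᵀ + A) * A ^ n) *ᵥ l = 0 := by
    intro n
    have h := exp_kernel_propagate A (Aᵀ + A) l hδ hker n 0 ⟨le_rfl, hδ.le⟩
    simpa using h
  have hall : ∀ u : ℝ, (Aᵀ + A) *ᵥ (exp (u • A) *ᵥ l) = 0 :=
    mulVec_exp_zero_of_kernel A (Aᵀ + A) l hkerpow
  intro t
  rw [dot_const_of_kernel_all A l hall t]

end Helpers

/-- The Euclidean norm on `ℝ^d`. -/
noncomputable def eNorm {d : ℕ} (x : Fin d → ℝ) : ℝ := Real.sqrt (x ⬝ᵥ x)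

/-- If `Φ_u(a_{n_k})x → l` along a sequence of switching times at which the input value is a
fixed `i` and the durations are bounded below by `δ > 0`, then `l ∈ V_i`. -/
theorem limit_mem_norm_preserved_subspace {d p : ℕ}
    (B : Fin p → Matrix (Fin d) (Fin d) ℝ)
    (hB : ∀ i, ∀ x : Fin d → ℝ, x ⬝ᵥ (((B i)ᵀ + B i).mulVec x) ≤ 0)
    (a : ℕ → ℝ) (ha0 : a 0 = 0) (hamono : StrictMono a) (hatop : Tendsto a atTop atTop)
    (v : ℕ → Fin p)
    (Φ : ℝ → Matrix (Fin d) (Fin d) ℝ) (hΦ0 : Φ 0 = 1)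
    (hΦ : ∀ n, ∀ t ∈ Set.Icc (a n) (a (n + 1)),
      Φ t = NormedSpace.exp ((t - a n) • B (v n)) * Φ (a n))
    (x : Fin d → ℝ) (l : Fin d → ℝ) (i : Fin p) (δ : ℝ) (hδ : 0 < δ)
    (nk : ℕ → ℕ) (hnk : StrictMono nk)
    (hval : ∀ k, v (nk k) = i)
    (hdur : ∀ k, δ ≤ a (nk k + 1) - a (nk k))
    (hlim : Tendsto (fun k => (Φ (a (nk k))).mulVec x) atTop (nhds l)) :
    ∀ t : ℝ, eNorm ((NormedSpace.exp (t • B i)).mulVec l) = eNorm l := by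
  intro t
  unfold eNorm
  exact main_thm B hB a ha0 hamono hatop v Φ hΦ0 hΦ x l i δ hδ nk hnk hval hdur hlim t
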